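/- Fix d ≥ 1 and t ≥ 2. Let X_t be the set (ℤ^d/tℤ^d) ∖ {[0]} with the action of the free group F_d on generators ê₁,…,ê_d given as follows: ê_i sends [(t−1)·e_i] to [e_i], and sends every other point [v] to [v + e_i]. Then for each pair 1 ≤ i < j ≤ d, the set of points x ∈ X_t with [ê_i,ê_j]·x ≠ x (where [a,b] = aba⁻¹b⁻¹) is exactly {[e_i], [e_j], [e_i + e_j]}. Consequently, the local defect of X_t with respect to E = {[ê_i,ê_j] : 1 ≤ i < j ≤ d} equals 3·binom(d,2)/(t^d − 1). -/

import Mathlib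

open scoped commutatorElement

theorem stmt15 (d t : ℕ) (hd : 1 ≤ d) (ht : 2 ≤ t) [NeZero t]
    (Φ : FreeGroup (Fin d) →* Equiv.Perm {v : Fin d → ZMod t // v ≠ 0})
    (hΦ : ∀ (i : Fin d) (x : {v : Fin d → ZMod t // v ≠ 0}),
      (Φ (FreeGroup.of i) x : Fin d → ZMod t) =
        if (x : Fin d → ZMod t) = Pi.single i ((t - 1 : ℕ) : ZMod t)
        then Pi.single i 1
        else (x : Fin d → ZMod t) + Pi.single i 1) :
    (∀ i j : Fin d, i < j → ∀ x : {v : Fin d → ZMod t // v ≠ 0},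
      (Φ ⁅FreeGroup.of i, FreeGroup.of j⁆ x ≠ x ↔
        (x : Fin d → ZMod t) = Pi.single i 1 ∨
        (x : Fin d → ZMod t) = Pi.single j 1 ∨
        (x : Fin d → ZMod t) = Pi.single i 1 + Pi.single j 1)) ∧
    (Nat.card {p : {v : Fin d → ZMod t // v ≠ 0} × (Fin d × Fin d) //
        p.2.1 < p.2.2 ∧ Φ ⁅FreeGroup.of p.2.1, FreeGroup.of p.2.2⁆ p.1 ≠ p.1} : ℝ) /
      Nat.card {v : Fin d → ZMod t // v ≠ 0}
      = 3 * (d.choose 2) / ((t : ℝ) ^ d - 1) := by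
  haveI : Fact (1 < t) := ⟨ht⟩
  have h1 : (1 : ZMod t) ≠ 0 := one_ne_zero
  have hsingle_ne : ∀ (i : Fin d), (Pi.single i 1 : Fin d → ZMod t) ≠ 0 := by
    intro i h
    exact h1 (by simpa using congrFun h i)
  have hcast : ((t - 1 : ℕ) : ZMod t) = -1 := by
    rw [Nat.cast_sub (by omega), ZMod.natCast_self, Nat.cast_one, zero_sub]
  -- apply formula
  have hA : ∀ (i : Fin d) (x : {v : Fin d → ZMod t // v ≠ 0}),
      (Φ (FreeGroup.of i) x : Fin d → ZMod t) =
        if (x : Fin d → ZMod t) = -Pi.single i 1 then Pi.single i 1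
        else (x : Fin d → ZMod t) + Pi.single i 1 := by
    intro i x
    rw [hΦ, hcast, show (Pi.single i (-1 : ZMod t) : Fin d → ZMod t)
      = -Pi.single i 1 from Pi.single_neg i 1]
  -- inverse formula
  have hAinv : ∀ (i : Fin d) (x : {v : Fin d → ZMod t // v ≠ 0}),
      ((Φ (FreeGroup.of i))⁻¹ x : Fin d → ZMod t) =
        if (x : Fin d → ZMod t) = Pi.single i 1 then -Pi.single i 1
        else (x : Fin d → ZMod t) - Pi.single i 1 := by
    intro i x
    set y := (Φ (FreeGroup.of i))⁻¹ x with hy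
    have hx : (Φ (FreeGroup.of i)) y = x := Equiv.apply_symm_apply _ x
    have key := hA i y
    rw [hx] at key
    by_cases hc : (y : Fin d → ZMod t) = -Pi.single i 1
    · rw [if_pos hc] at key
      rw [if_pos key]
      exact hc
    · rw [if_neg hc] at key
      have hxne : (x : Fin d → ZMod t) ≠ Pi.single i 1 := by
        intro h
        rw [h] at key
        exact y.2 (add_eq_right.mp key.symm)
      rw [if_neg hxne, key]
      abel
  -- distinctness facts, parametrized by i ≠ j
  have hne1 : ∀ (i j : Fin d), i ≠ j →
      (Pi.single i 1 : Fin d → ZMod t) ≠ Pi.single j 1 := by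
    intro i j hij h
    have := congrFun h i
    rw [Pi.single_eq_same, Pi.single_eq_of_ne hij] at this
    exact h1 this
  have hne2 : ∀ (i j : Fin d), i ≠ j →
      (Pi.single j 1 : Fin d → ZMod t) ≠ -Pi.single i 1 := by
    intro i j hij h
    have := congrFun h j
    rw [Pi.single_eq_same, Pi.neg_apply, Pi.single_eq_of_ne (Ne.symm hij), neg_zero] at this
    exact h1 this
  have hne3 : ∀ (i j : Fin d), i ≠ j →
      (-Pi.single i 1 : Fin d → ZMod t) ≠ Pi.single j 1 := by
    intro i j hij h
    have := congrFun h i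
    rw [Pi.neg_apply, Pi.single_eq_same, Pi.single_eq_of_ne hij] at this
    exact h1 (by rwa [neg_eq_zero] at this)
  -- commutator formula
  have hC : ∀ (i j : Fin d), i ≠ j → ∀ x : {v : Fin d → ZMod t // v ≠ 0},
      ((Φ ⁅FreeGroup.of i, FreeGroup.of j⁆) x : Fin d → ZMod t) =
        if (x : Fin d → ZMod t) = Pi.single i 1 then Pi.single i 1 + Pi.single j 1
        else if (x : Fin d → ZMod t) = Pi.single j 1 then Pi.single i 1
        else if (x : Fin d → ZMod t) = Pi.single i 1 + Pi.single j 1 then Pi.single j 1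
        else x := by
    intro i j hij x
    have hrw : Φ ⁅FreeGroup.of i, FreeGroup.of j⁆
        = Φ (FreeGroup.of i) * Φ (FreeGroup.of j) * (Φ (FreeGroup.of i))⁻¹
          * (Φ (FreeGroup.of j))⁻¹ := by
      rw [commutatorElement_def, map_mul, map_mul, map_mul, map_inv, map_inv]
    rw [hrw]
    simp only [Equiv.Perm.mul_apply]
    set ei : Fin d → ZMod t := Pi.single i 1 with hei
    set ej : Fin d → ZMod t := Pi.single j 1 with hej
    have heij : ei ≠ ej := hne1 i j hij
    have hei0 : ei ≠ 0 := hsingle_ne i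
    have hej0 : ej ≠ 0 := hsingle_ne j
    by_cases hx1 : (x : Fin d → ZMod t) = ei
    · have e1 : ((Φ (FreeGroup.of j))⁻¹ x : Fin d → ZMod t) = ei - ej := by
        rw [hAinv, hx1, if_neg heij]
      have e2 : ((Φ (FreeGroup.of i))⁻¹ ((Φ (FreeGroup.of j))⁻¹ x) : Fin d → ZMod t)
          = -ej := by
        rw [hAinv, e1, if_neg (fun h => hej0 (sub_eq_self.mp h))]
        abel
      have e3 : ((Φ (FreeGroup.of j)) ((Φ (FreeGroup.of i))⁻¹ ((Φ (FreeGroup.of j))⁻¹ x))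
          : Fin d → ZMod t) = ej := by
        rw [hA, e2, if_pos rfl]
      rw [hA, e3, if_pos hx1, if_neg (hne2 i j hij)]
      abel
    · by_cases hx2 : (x : Fin d → ZMod t) = ej
      · have e1 : ((Φ (FreeGroup.of j))⁻¹ x : Fin d → ZMod t) = -ej := by
          rw [hAinv, if_pos hx2]
        have e2 : ((Φ (FreeGroup.of i))⁻¹ ((Φ (FreeGroup.of j))⁻¹ x) : Fin d → ZMod t)
            = -ej - ei := by
          rw [hAinv, e1, if_neg (hne3 j i (Ne.symm hij))]
        have e3 : ((Φ (FreeGroup.of j)) ((Φ (FreeGroup.of i))⁻¹ ((Φ (FreeGroup.of j))⁻¹ x))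
            : Fin d → ZMod t) = -ei := by
          rw [hA, e2, if_neg (fun h => hei0 (sub_eq_self.mp h))]
          abel
        rw [hA, e3, if_pos (by rfl), if_neg (fun h => heij (h.symm.trans hx2)), if_pos hx2]
      · by_cases hx3 : (x : Fin d → ZMod t) = ei + ej
        · have e1 : ((Φ (FreeGroup.of j))⁻¹ x : Fin d → ZMod t) = ei := by
            rw [hAinv, hx3, if_neg (fun h => hei0 (add_eq_right.mp h))]
            abel
          have e2 : ((Φ (FreeGroup.of i))⁻¹ ((Φ (FreeGroup.of j))⁻¹ x) : Fin d → ZMod t)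
              = -ei := by
            rw [hAinv, e1, if_pos rfl]
          have e3 : ((Φ (FreeGroup.of j)) ((Φ (FreeGroup.of i))⁻¹ ((Φ (FreeGroup.of j))⁻¹ x))
              : Fin d → ZMod t) = -ei + ej := by
            rw [hA, e2, if_neg (fun h => heij (neg_inj.mp h))]
          rw [hA, e3, if_neg (fun h => hej0 (add_eq_left.mp h)), if_neg hx1,
            if_neg hx2, if_pos hx3]
          abel
        · have e1 : ((Φ (FreeGroup.of j))⁻¹ x : Fin d → ZMod t)
              = (x : Fin d → ZMod t) - ej := by
            rw [hAinv, if_neg hx2]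
          have e2 : ((Φ (FreeGroup.of i))⁻¹ ((Φ (FreeGroup.of j))⁻¹ x) : Fin d → ZMod t)
              = (x : Fin d → ZMod t) - ej - ei := by
            rw [hAinv, e1, if_neg (by
              rw [sub_eq_iff_eq_add]
              exact hx3)]
          have e3 : ((Φ (FreeGroup.of j)) ((Φ (FreeGroup.of i))⁻¹ ((Φ (FreeGroup.of j))⁻¹ x))
              : Fin d → ZMod t) = (x : Fin d → ZMod t) - ei := by
            rw [hA, e2, if_neg (by
              rw [sub_eq_iff_eq_add, sub_eq_iff_eq_add]
              exact fun h => hx1 (h.trans (by abel)))]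
            abel
          rw [hA, e3, if_neg (by
            rw [sub_eq_iff_eq_add]
            exact fun h => x.2 (h.trans (by abel))), if_neg hx1, if_neg hx2, if_neg hx3]
          abel
  -- first conjunct
  have part1 : ∀ i j : Fin d, i < j → ∀ x : {v : Fin d → ZMod t // v ≠ 0},
      (Φ ⁅FreeGroup.of i, FreeGroup.of j⁆ x ≠ x ↔
        (x : Fin d → ZMod t) = Pi.single i 1 ∨
        (x : Fin d → ZMod t) = Pi.single j 1 ∨
        (x : Fin d → ZMod t) = Pi.single i 1 + Pi.single j 1) := by
    intro i j hij x
    have hij' : i ≠ j := ne_of_lt hij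
    rw [ne_eq, Subtype.ext_iff, hC i j hij' x]
    by_cases hx1 : (x : Fin d → ZMod t) = Pi.single i 1
    · rw [if_pos hx1]
      exact iff_of_true (fun h => hsingle_ne j (by
        rw [hx1] at h
        exact add_eq_right.mp (by rwa [add_comm] at h))) (Or.inl hx1)
    · rw [if_neg hx1]
      by_cases hx2 : (x : Fin d → ZMod t) = Pi.single j 1
      · rw [if_pos hx2]
        exact iff_of_true (fun h => hne1 i j hij' (h.trans hx2)) (Or.inr (Or.inl hx2))
      · rw [if_neg hx2]
        by_cases hx3 : (x : Fin d → ZMod t) = Pi.single i 1 + Pi.single j 1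
        · rw [if_pos hx3]
          exact iff_of_true (fun h => hsingle_ne i
            (add_eq_right.mp ((h.trans hx3).symm))) (Or.inr (Or.inr hx3))
        · rw [if_neg hx3]
          exact iff_of_false (fun h => h rfl) (by
            push_neg
            exact ⟨hx1, hx2, hx3⟩)
  refine ⟨part1, ?_⟩
  -- cardinality of the ambient set
  have hTcard : Nat.card {v : Fin d → ZMod t // v ≠ 0} = t ^ d - 1 := by
    rw [Nat.card_eq_fintype_card]
    have h0 : Fintype.card {v : Fin d → ZMod t // v ≠ 0}
        = Fintype.card (Fin d → ZMod t) - Fintype.card {v : Fin d → ZMod t // v = 0} :=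
      Fintype.card_subtype_compl _
    rw [h0, Fintype.card_subtype_eq (0 : Fin d → ZMod t), Fintype.card_fun, ZMod.card,
      Fintype.card_fin]
  -- count of moved points for a fixed good pair
  have hthree : ∀ i j : Fin d, i < j →
      Fintype.card {x : {v : Fin d → ZMod t // v ≠ 0} //
        Φ ⁅FreeGroup.of i, FreeGroup.of j⁆ x ≠ x} = 3 := by
    intro i j hij
    have hij' : i ≠ j := ne_of_lt hij
    have nab : (Pi.single i 1 : Fin d → ZMod t) ≠ Pi.single j 1 := hne1 i j hij'
    have nac : (Pi.single i 1 : Fin d → ZMod t) ≠ Pi.single i 1 + Pi.single j 1 :=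
      fun h => hsingle_ne j (left_eq_add.mp h)
    have nbc : (Pi.single j 1 : Fin d → ZMod t) ≠ Pi.single i 1 + Pi.single j 1 :=
      fun h => hsingle_ne i (right_eq_add.mp h)
    have nc0 : (Pi.single i 1 + Pi.single j 1 : Fin d → ZMod t) ≠ 0 := by
      intro h
      have := congrFun h i
      rw [Pi.add_apply, Pi.single_eq_same, Pi.single_eq_of_ne hij', add_zero,
        Pi.zero_apply] at this
      exact h1 this
    rw [Fintype.card_congr ((Equiv.subtypeEquivRight (fun x => part1 i j hij x)).trans
      ((Equiv.subtypeSubtypeEquivSubtypeInter (fun v : Fin d → ZMod t => v ≠ 0)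
        (fun v => v = Pi.single i 1 ∨ v = Pi.single j 1 ∨
          v = Pi.single i 1 + Pi.single j 1)).trans
        (Equiv.subtypeEquivRight (fun v => ⟨And.right, fun h => ⟨by
          rcases h with h | h | h <;> rw [h]
          · exact hsingle_ne i
          · exact hsingle_ne j
          · exact nc0, h⟩⟩)))), Fintype.card_subtype]
    have hset : (Finset.univ.filter fun v : Fin d → ZMod t =>
        v = Pi.single i 1 ∨ v = Pi.single j 1 ∨ v = Pi.single i 1 + Pi.single j 1)
        = {Pi.single i 1, Pi.single j 1, Pi.single i 1 + Pi.single j 1} := by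
      ext v
      simp [Finset.mem_insert]
    rw [hset, Finset.card_insert_of_notMem (by simp [nab, nac]),
      Finset.card_insert_of_notMem (by simp [nbc]), Finset.card_singleton]
  -- number of pairs
  have hpairs : (Finset.univ.filter fun q : Fin d × Fin d => q.1 < q.2).card
      = d.choose 2 := by
    rw [Finset.card_filter, ← Finset.univ_product_univ, Finset.sum_product_right]
    have hrow : ∀ j : Fin d, (∑ i : Fin d, if (i, j).1 < (i, j).2 then 1 else 0)
        = (j : ℕ) := by
      intro j
      rw [← Finset.card_filter]
      have : (Finset.univ.filter fun i : Fin d => (i, j).1 < (i, j).2) = Finset.Iio j := by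
        ext k
        simp
      rw [this, Fin.card_Iio]
    rw [Finset.sum_congr rfl (fun j _ => hrow j),
      show (∑ j : Fin d, (j : ℕ)) = ∑ i ∈ Finset.range d, i from
        Fin.sum_univ_eq_sum_range (fun i => i) d,
      Finset.sum_range_id, Nat.choose_two_right]
  -- numerator count
  have hNum : Nat.card {p : {v : Fin d → ZMod t // v ≠ 0} × (Fin d × Fin d) //
      p.2.1 < p.2.2 ∧ Φ ⁅FreeGroup.of p.2.1, FreeGroup.of p.2.2⁆ p.1 ≠ p.1}
      = 3 * d.choose 2 := by
    have e : {p : {v : Fin d → ZMod t // v ≠ 0} × (Fin d × Fin d) //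
        p.2.1 < p.2.2 ∧ Φ ⁅FreeGroup.of p.2.1, FreeGroup.of p.2.2⁆ p.1 ≠ p.1}
        ≃ Σ q : Fin d × Fin d, {x : {v : Fin d → ZMod t // v ≠ 0} //
            q.1 < q.2 ∧ Φ ⁅FreeGroup.of q.1, FreeGroup.of q.2⁆ x ≠ x} :=
      (Equiv.subtypeEquiv (Equiv.prodComm _ _) (fun p => Iff.rfl)).trans
        (Equiv.subtypeProdEquivSigmaSubtype fun (q : Fin d × Fin d) x =>
          q.1 < q.2 ∧ Φ ⁅FreeGroup.of q.1, FreeGroup.of q.2⁆ x ≠ x)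
    rw [Nat.card_congr e, Nat.card_eq_fintype_card, Fintype.card_sigma]
    have hq : ∀ q : Fin d × Fin d,
        Fintype.card {x : {v : Fin d → ZMod t // v ≠ 0} //
          q.1 < q.2 ∧ Φ ⁅FreeGroup.of q.1, FreeGroup.of q.2⁆ x ≠ x}
        = if q.1 < q.2 then 3 else 0 := by
      intro q
      by_cases h : q.1 < q.2
      · rw [if_pos h, Fintype.card_congr (Equiv.subtypeEquivRight
          (fun x => and_iff_right h)), hthree q.1 q.2 h]
      · rw [if_neg h, Fintype.card_eq_zero_iff]
        exact ⟨fun x => h x.2.1⟩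
    rw [Finset.sum_congr rfl (fun q _ => hq q), ← Finset.sum_filter, Finset.sum_const,
      hpairs, smul_eq_mul, mul_comm]
  rw [hNum, hTcard]
  have h1le : 1 ≤ t ^ d := Nat.one_le_pow d t (by omega)
  rw [Nat.cast_sub h1le]
  push_cast
  ring
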